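/- Let k ≥ 1, let m : ℝ → ℝ^(2k) be the moment curve m(t) = (t, t², …, t^(2k)), and let I be any (k+1)-element subset of {1, 2, …, 2k+3}. Then the number of points in the intersection of conv(m(I)) with the boundary of the simplex conv(m({1,…,2k+3} \ I)) (the union of the convex hulls of the images of the (k+1)-element subsets of {1,…,2k+3} \ I) equals the number of (k+1)-element subsets J of {1, …, 2k+3} \ I that alternate with I. -/

import Mathlib

open scoped Classical

/-- The moment curve `t ↦ (t, t², …, t^d)` in `ℝ^d`. -/
def moment (d : ℕ) : ℝ → (Fin d → ℝ) := fun t i => t ^ ((i : ℕ) + 1)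

/-- Two finite subsets `P = {s₁ < s₂ < … < s_p}` and `Q = {t₁ < t₂ < … < t_p}` of a
linear order alternate if either `s₁ < t₁ < s₂ < t₂ < … < s_p < t_p` or
`t₁ < s₁ < t₂ < s₂ < … < t_p < s_p`. -/
def Alternates {α : Type*} [LinearOrder α] (P Q : Finset α) : Prop :=
  ∃ (p : ℕ) (f g : Fin p → α), StrictMono f ∧ StrictMono g ∧
    Set.range f = (P : Set α) ∧ Set.range g = (Q : Set α) ∧
    (((∀ i : Fin p, f i < g i) ∧ ∀ i j : Fin p, (i : ℕ) + 1 = (j : ℕ) → g i < f j) ∨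
      ((∀ i : Fin p, g i < f i) ∧ ∀ i j : Fin p, (i : ℕ) + 1 = (j : ℕ) → f i < g j))

namespace Stmt15

open Finset Polynomial

def mcv (k : ℕ) : ℕ → (Fin (2*k) → ℝ) := fun n => moment (2*k) (n:ℝ)

lemma mcv_inj (k : ℕ) (hk : 1 ≤ k) : Function.Injective (mcv k) := by
  intro m n h
  have h0 : (0:ℕ) < 2*k := by omega
  have := congrFun h ⟨0, h0⟩
  simpa [mcv, moment] using this

lemma mem_hull_iff {E : Type*} [AddCommGroup E] [Module ℝ E] {φ : ℕ → E}
    (hφ : Function.Injective φ) (A : Finset ℕ) (x : E) :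
    x ∈ convexHull ℝ (φ '' (A : Set ℕ)) ↔
      ∃ w : ℕ → ℝ, (∀ s ∈ A, 0 ≤ w s) ∧ ∑ s ∈ A, w s = 1 ∧ ∑ s ∈ A, w s • φ s = x := by
  constructor
  · intro hx
    rw [show φ '' (A : Set ℕ) = ((A.image φ : Finset E) : Set E) by rw [coe_image],
      Finset.convexHull_eq] at hx
    obtain ⟨w, hw0, hw1, hwx⟩ := hx
    refine ⟨fun s => w (φ s), fun s hs => hw0 _ (mem_image_of_mem _ hs), ?_, ?_⟩
    · rw [← hw1]; exact (Finset.sum_image (fun a _ b _ h => hφ h)).symm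
    · rw [← hwx, Finset.centerMass_eq_of_sum_1 _ _ hw1]
      rw [Finset.sum_image (fun a _ b _ h => hφ h)]
      rfl
  · rintro ⟨w, hw0, hw1, hwx⟩
    rw [← hwx, show (∑ s ∈ A, w s • φ s) = A.centerMass w φ from
      (Finset.centerMass_eq_of_sum_1 _ φ hw1).symm]
    exact Finset.centerMass_mem_convexHull _ hw0 (by rw [hw1]; norm_num)
      (fun i hi => Set.mem_image_of_mem _ (Finset.mem_coe.mpr hi))

lemma sum_mul_eval {U : Finset ℕ} {c : ℕ → ℝ} {d : ℕ}
    (h : ∀ j ≤ d, ∑ s ∈ U, c s * (s:ℝ)^j = 0)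
    (P : Polynomial ℝ) (hP : P.natDegree ≤ d) :
    ∑ s ∈ U, c s * P.eval (s:ℝ) = 0 := by
  have he : ∀ s : ℕ, P.eval (s:ℝ) = ∑ j ∈ Finset.range (d+1), P.coeff j * (s:ℝ)^j :=
    fun s => Polynomial.eval_eq_sum_range' (Nat.lt_succ_of_le hP) _
  calc ∑ s ∈ U, c s * P.eval (s:ℝ)
      = ∑ s ∈ U, ∑ j ∈ Finset.range (d+1), P.coeff j * (c s * (s:ℝ)^j) := by
        refine Finset.sum_congr rfl fun s _ => ?_
        rw [he s, Finset.mul_sum]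
        exact Finset.sum_congr rfl fun j _ => by ring
    _ = ∑ j ∈ Finset.range (d+1), P.coeff j * ∑ s ∈ U, c s * (s:ℝ)^j := by
        rw [Finset.sum_comm]
        exact Finset.sum_congr rfl fun j _ => by rw [Finset.mul_sum]
    _ = 0 := Finset.sum_eq_zero fun j hj => by
        rw [h j (Nat.lt_succ_iff.mp (Finset.mem_range.mp hj)), mul_zero]

lemma key {k : ℕ} {U : Finset ℕ} (hU : U.card = 2*k+2) {c : ℕ → ℝ}
    (hc : ∀ j ≤ 2*k, ∑ s ∈ U, c s * (s:ℝ)^j = 0) (i : Fin (2*k+1)) :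
    ∃ r : ℝ, 0 < r ∧
      c (U.orderEmbOfFin hU i.castSucc) = -(r * c (U.orderEmbOfFin hU i.succ)) := by
  set e := U.orderEmbOfFin hU with he
  have hiota : ∀ s ∈ U, ∃ j : Fin (2*k+2), e j = s := by
    intro s hs
    have : s ∈ Set.range e := by
      rw [Finset.range_orderEmbOfFin]; exact hs
    exact this
  set a := e i.castSucc with ha
  set b := e i.succ with hb
  have hab : a < b := e.strictMono Fin.castSucc_lt_succ
  have haU : a ∈ U := Finset.orderEmbOfFin_mem U hU _
  have hbU : b ∈ U := Finset.orderEmbOfFin_mem U hU _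
  set V : Finset ℕ := U \ {a, b} with hV
  have hVsub : {a, b} ⊆ U := by
    intro s hs; rcases Finset.mem_insert.mp hs with h | h
    · exact h ▸ haU
    · exact (Finset.mem_singleton.mp h) ▸ hbU
  have hVcard : V.card = 2*k := by
    rw [hV, Finset.card_sdiff_of_subset hVsub, hU, Finset.card_pair hab.ne]
    omega
  set P : Polynomial ℝ := ∏ s ∈ V, (X - C (s:ℝ)) with hP
  have hdeg : P.natDegree ≤ 2*k := by
    rw [hP, Polynomial.natDegree_prod _ _ (fun s _ => X_sub_C_ne_zero _)]
    calc ∑ x ∈ V, (X - C ((x:ℕ):ℝ)).natDegree = ∑ _x ∈ V, 1 :=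
          Finset.sum_congr rfl fun s _ => Polynomial.natDegree_X_sub_C _
      _ = V.card := by simp
      _ ≤ 2*k := le_of_eq hVcard
  have hsum := sum_mul_eval hc P hdeg
  have hzero : ∀ s ∈ V, P.eval (s:ℝ) = 0 := by
    intro s hs
    rw [hP, Polynomial.eval_prod]
    exact Finset.prod_eq_zero hs (by simp)
  have hsplit : c a * P.eval (a:ℝ) + c b * P.eval (b:ℝ) = 0 := by
    have h1 : ∑ s ∈ V, c s * P.eval (s:ℝ) + ∑ s ∈ {a, b}, c s * P.eval (s:ℝ)
        = ∑ s ∈ U, c s * P.eval (s:ℝ) := Finset.sum_sdiff hVsub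
    rw [hsum] at h1
    have h2 : ∑ s ∈ V, c s * P.eval (s:ℝ) = 0 :=
      Finset.sum_eq_zero fun s hs => by rw [hzero s hs, mul_zero]
    rw [h2, zero_add, Finset.sum_pair hab.ne] at h1
    exact h1
  -- positivity of P.eval a * P.eval b
  have hposfac : ∀ s ∈ V, 0 < ((a:ℝ) - s) * ((b:ℝ) - s) := by
    intro s hs
    have hsU : s ∈ U := (Finset.mem_sdiff.mp hs).1
    have hsne : s ≠ a ∧ s ≠ b := by
      have := (Finset.mem_sdiff.mp hs).2
      simp only [Finset.mem_insert, Finset.mem_singleton] at this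
      tauto
    obtain ⟨j, hj⟩ := hiota s hsU
    have hjne : (j:ℕ) ≠ (i:ℕ) ∧ (j:ℕ) ≠ (i:ℕ)+1 := by
      constructor
      · intro h; apply hsne.1; rw [← hj, ha]; congr 1; exact Fin.ext (by simpa using h)
      · intro h; apply hsne.2; rw [← hj, hb]; congr 1; exact Fin.ext (by simpa using h)
    have : s < a ∨ b < s := by
      rcases lt_or_ge (j:ℕ) (i:ℕ) with h | h
      · left; rw [← hj]; exact e.strictMono (show j < i.castSucc by simpa [Fin.lt_def] using h)
      · right; rw [← hj]
        refine e.strictMono (show i.succ < j by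
          simp only [Fin.lt_def, Fin.val_succ]
          omega)
    rcases this with h | h
    · have h1 : (s:ℝ) < a := by exact_mod_cast h
      have h2 : (s:ℝ) < b := by exact_mod_cast h.trans hab
      exact mul_pos (by linarith) (by linarith)
    · have h1 : (b:ℝ) < s := by exact_mod_cast h
      have h2 : (a:ℝ) < s := by exact_mod_cast hab.trans h
      exact mul_pos_of_neg_of_neg (by linarith) (by linarith)
  have hprodpos : 0 < P.eval (a:ℝ) * P.eval (b:ℝ) := by
    rw [hP, Polynomial.eval_prod, Polynomial.eval_prod, ← Finset.prod_mul_distrib]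
    refine Finset.prod_pos fun s hs => ?_
    simpa using hposfac s hs
  have hpa : P.eval (a:ℝ) ≠ 0 := fun h => by rw [h, zero_mul] at hprodpos; exact lt_irrefl _ hprodpos
  refine ⟨P.eval (b:ℝ) / P.eval (a:ℝ), ?_, ?_⟩
  · have : P.eval (b:ℝ) / P.eval (a:ℝ) = (P.eval (a:ℝ) * P.eval (b:ℝ)) / (P.eval (a:ℝ))^2 := by
      field_simp
    rw [this]
    exact div_pos hprodpos (by positivity)
  · field_simp
    linear_combination hsplit

lemma chain_iff {n : ℕ} (P : Fin (n+1) → Prop)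
    (h : ∀ i : Fin n, (P i.castSucc ↔ P i.succ)) : ∀ i, (P i ↔ P 0) := by
  intro i
  induction i using Fin.induction with
  | zero => exact Iff.rfl
  | succ i ih => exact (h i).symm.trans ih

lemma chain_flip {n : ℕ} (P : Fin (n+1) → Prop)
    (h : ∀ i : Fin n, (P i.castSucc ↔ ¬ P i.succ)) :
    ∀ i, (P i ↔ (Even (i:ℕ) ↔ P 0)) := by
  intro i
  induction i using Fin.induction with
  | zero => simp
  | succ i ih =>
    have h1 := h i
    have h2 : Even ((i.succ : Fin (n+1)) : ℕ) ↔ ¬ Even ((i.castSucc : Fin (n+1)) : ℕ) := by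
      simp [Nat.even_add_one]
    tauto

lemma zero_all {k : ℕ} {U : Finset ℕ} (hU : U.card = 2*k+2) {c : ℕ → ℝ}
    (hc : ∀ j ≤ 2*k, ∑ s ∈ U, c s * (s:ℝ)^j = 0)
    (h0 : c (U.orderEmbOfFin hU 0) = 0) : ∀ s ∈ U, c s = 0 := by
  have hch : ∀ i : Fin (2*k+1),
      (c (U.orderEmbOfFin hU i.castSucc) = 0 ↔ c (U.orderEmbOfFin hU i.succ) = 0) := by
    intro i
    obtain ⟨r, hr, hrel⟩ := key hU hc i
    constructor
    · intro h
      rw [h] at hrel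
      have : c (U.orderEmbOfFin hU i.succ) * r = 0 := by linarith
      rcases mul_eq_zero.mp this with h' | h'
      · exact h'
      · exact absurd h' hr.ne'
    · intro h; rw [hrel, h, mul_zero, neg_zero]
  have hall : ∀ i : Fin (2*k+2), c (U.orderEmbOfFin hU i) = 0 := by
    intro i
    exact (chain_iff (fun i => c (U.orderEmbOfFin hU i) = 0) hch i).mpr h0
  intro s hs
  have : s ∈ Set.range (U.orderEmbOfFin hU) := by
    rw [Finset.range_orderEmbOfFin]; exact hs
  obtain ⟨j, hj⟩ := this
  exact hj ▸ hall j

lemma master {k : ℕ} {U : Finset ℕ} (hU : U.card = 2*k+2) {c : ℕ → ℝ}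
    (hc : ∀ j ≤ 2*k, ∑ s ∈ U, c s * (s:ℝ)^j = 0)
    (hne : ∃ s ∈ U, c s ≠ 0) :
    (∀ s ∈ U, c s ≠ 0) ∧
    (∀ i : Fin (2*k+1),
      (0 < c (U.orderEmbOfFin hU i.castSucc) ↔ ¬ 0 < c (U.orderEmbOfFin hU i.succ))) := by
  have h0 : c (U.orderEmbOfFin hU 0) ≠ 0 := by
    intro h
    obtain ⟨s, hs, hcs⟩ := hne
    exact hcs (zero_all hU hc h s hs)
  have hall : ∀ s ∈ U, c s ≠ 0 := by
    intro s hs h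
    have : s ∈ Set.range (U.orderEmbOfFin hU) := by
      rw [Finset.range_orderEmbOfFin]; exact hs
    obtain ⟨j, hj⟩ := this
    -- c (e j) = 0, propagate to e 0 via chain
    have hch : ∀ i : Fin (2*k+1),
        (c (U.orderEmbOfFin hU i.castSucc) = 0 ↔ c (U.orderEmbOfFin hU i.succ) = 0) := by
      intro i
      obtain ⟨r, hr, hrel⟩ := key hU hc i
      constructor
      · intro h'
        rw [h'] at hrel
        have : c (U.orderEmbOfFin hU i.succ) * r = 0 := by linarith
        rcases mul_eq_zero.mp this with h'' | h''
        · exact h''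
        · exact absurd h'' hr.ne'
      · intro h'; rw [hrel, h', mul_zero, neg_zero]
    exact h0 ((chain_iff (fun i => c (U.orderEmbOfFin hU i) = 0) hch j).mp (hj ▸ h))
  refine ⟨hall, fun i => ?_⟩
  obtain ⟨r, hr, hrel⟩ := key hU hc i
  have hb := hall _ (Finset.orderEmbOfFin_mem U hU i.succ)
  have ha := hall _ (Finset.orderEmbOfFin_mem U hU i.castSucc)
  constructor
  · intro hpos hpos'
    nlinarith
  · intro hneg
    rcases lt_or_gt_of_ne hb with h | h
    · nlinarith
    · exact absurd h hneg

lemma scalar_mult {k : ℕ} {U : Finset ℕ} (hU : U.card = 2*k+2) {c c' : ℕ → ℝ}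
    (hc : ∀ j ≤ 2*k, ∑ s ∈ U, c s * (s:ℝ)^j = 0)
    (hc' : ∀ j ≤ 2*k, ∑ s ∈ U, c' s * (s:ℝ)^j = 0)
    (h0 : c (U.orderEmbOfFin hU 0) ≠ 0) :
    ∀ s ∈ U, c' s = (c' (U.orderEmbOfFin hU 0) / c (U.orderEmbOfFin hU 0)) * c s := by
  set l : ℝ := c' (U.orderEmbOfFin hU 0) / c (U.orderEmbOfFin hU 0) with hl
  have hc'' : ∀ j ≤ 2*k, ∑ s ∈ U, (c' s - l * c s) * (s:ℝ)^j = 0 := by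
    intro j hj
    have : ∑ s ∈ U, (c' s - l * c s) * (s:ℝ)^j
        = (∑ s ∈ U, c' s * (s:ℝ)^j) - l * ∑ s ∈ U, c s * (s:ℝ)^j := by
      rw [Finset.mul_sum, ← Finset.sum_sub_distrib]
      exact Finset.sum_congr rfl fun s _ => by ring
    rw [this, hc j hj, hc' j hj, mul_zero, sub_zero]
  have h00 : c' (U.orderEmbOfFin hU 0) - l * c (U.orderEmbOfFin hU 0) = 0 := by
    rw [hl]; field_simp; ring
  have := zero_all hU (c := fun s => c' s - l * c s) hc'' h00
  intro s hs
  have hz : c' s - l * c s = 0 := this s hs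
  linarith


lemma weights_dep {k : ℕ} {A B : Finset ℕ} (hd : Disjoint A B) {a b : ℕ → ℝ}
    {x : Fin (2*k) → ℝ}
    (ha1 : ∑ s ∈ A, a s = 1) (hax : ∑ s ∈ A, a s • mcv k s = x)
    (hb1 : ∑ s ∈ B, b s = 1) (hbx : ∑ s ∈ B, b s • mcv k s = x) :
    ∀ j ≤ 2*k, ∑ s ∈ A ∪ B, (if s ∈ A then a s else -b s) * (s:ℝ)^j = 0 := by
  intro j hj
  rw [Finset.sum_union hd]
  have hA : ∑ s ∈ A, (if s ∈ A then a s else -b s) * (s:ℝ)^j = ∑ s ∈ A, a s * (s:ℝ)^j :=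
    Finset.sum_congr rfl fun s hs => by rw [if_pos hs]
  have hB : ∑ s ∈ B, (if s ∈ A then a s else -b s) * (s:ℝ)^j = -∑ s ∈ B, b s * (s:ℝ)^j := by
    rw [← Finset.sum_neg_distrib]
    refine Finset.sum_congr rfl fun s hs => ?_
    rw [if_neg (Finset.disjoint_right.mp hd hs)]
    ring
  rw [hA, hB]
  rcases Nat.eq_zero_or_pos j with hj0 | hjpos
  · subst hj0
    simp only [pow_zero, mul_one]
    rw [ha1, hb1]; ring
  · obtain ⟨j', rfl⟩ : ∃ j', j = j' + 1 := ⟨j - 1, by omega⟩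
    have hj' : j' < 2*k := by omega
    have hcoord : ∀ (C : Finset ℕ) (w : ℕ → ℝ), (∑ s ∈ C, w s • mcv k s = x) →
        ∑ s ∈ C, w s * (s:ℝ)^(j'+1) = x ⟨j', hj'⟩ := by
      intro C w hw
      have := congrFun hw ⟨j', hj'⟩
      rw [Finset.sum_apply] at this
      simpa [mcv, moment] using this
    rw [hcoord A a hax, hcoord B b hbx]
    ring

lemma core {k : ℕ} {U A B : Finset ℕ} (hAB : A ∪ B = U)
    (hd : Disjoint A B) (hU : U.card = 2*k+2)
    {a b : ℕ → ℝ} {x : Fin (2*k) → ℝ}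
    (ha0 : ∀ s ∈ A, 0 ≤ a s) (ha1 : ∑ s ∈ A, a s = 1) (hax : ∑ s ∈ A, a s • mcv k s = x)
    (hb0 : ∀ s ∈ B, 0 ≤ b s) (hb1 : ∑ s ∈ B, b s = 1) (hbx : ∑ s ∈ B, b s • mcv k s = x) :
    (∀ s ∈ A, 0 < a s) ∧ (∀ s ∈ B, 0 < b s) ∧
    (∀ i : Fin (2*k+1),
      (U.orderEmbOfFin hU i.castSucc ∈ A ↔ ¬ U.orderEmbOfFin hU i.succ ∈ A)) := by
  set c : ℕ → ℝ := fun s => if s ∈ A then a s else -b s with hcdef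
  have hc : ∀ j ≤ 2*k, ∑ s ∈ U, c s * (s:ℝ)^j = 0 := by
    rw [← hAB]; exact weights_dep hd ha1 hax hb1 hbx
  have hne : ∃ s ∈ U, c s ≠ 0 := by
    by_contra h
    push_neg at h
    have : ∑ s ∈ A, a s = 0 := by
      refine Finset.sum_eq_zero fun s hs => ?_
      have hsU : s ∈ U := hAB ▸ Finset.mem_union_left _ hs
      simpa [hcdef, hs] using h s hsU
    rw [ha1] at this; norm_num at this
  obtain ⟨hall, halt⟩ := master hU hc hne
  have hApos : ∀ s ∈ A, 0 < a s := by
    intro s hs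
    have hsU : s ∈ U := hAB ▸ Finset.mem_union_left _ hs
    have hne' : a s ≠ 0 := by simpa [hcdef, hs] using hall s hsU
    exact lt_of_le_of_ne (ha0 s hs) (Ne.symm hne')
  have hBpos : ∀ s ∈ B, 0 < b s := by
    intro s hs
    have hsU : s ∈ U := hAB ▸ Finset.mem_union_right _ hs
    have hsA : s ∉ A := Finset.disjoint_right.mp hd hs
    have hne' : b s ≠ 0 := by
      have := hall s hsU
      simp only [hcdef, if_neg hsA] at this
      intro h; exact this (by rw [h, neg_zero])
    exact lt_of_le_of_ne (hb0 s hs) (Ne.symm hne')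
  refine ⟨hApos, hBpos, fun i => ?_⟩
  have hmem : ∀ j : Fin (2*k+2), (U.orderEmbOfFin hU j ∈ A ↔ 0 < c (U.orderEmbOfFin hU j)) := by
    intro j
    have hjU : U.orderEmbOfFin hU j ∈ U := Finset.orderEmbOfFin_mem U hU j
    constructor
    · intro hj
      simpa [hcdef, hj] using hApos _ hj
    · intro hj
      by_contra hjA
      have hjB : U.orderEmbOfFin hU j ∈ B := by
        rcases Finset.mem_union.mp (by rw [hAB]; exact hjU) with h | h
        · exact absurd h hjA
        · exact h
      simp only [hcdef, if_neg hjA] at hj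
      have := hBpos _ hjB
      linarith
  rw [hmem i.castSucc, hmem i.succ]
  exact halt i

lemma small_indep {k : ℕ} {V : Finset ℕ} (hV : V.card ≤ 2*k+1) {d : ℕ → ℝ}
    (hd : ∀ j ≤ 2*k, ∑ s ∈ V, d s * (s:ℝ)^j = 0) : ∀ s ∈ V, d s = 0 := by
  intro s0 hs0
  set P : Polynomial ℝ := ∏ s ∈ V.erase s0, (Polynomial.X - Polynomial.C (s:ℝ)) with hP
  have hdeg : P.natDegree ≤ 2*k := by
    rw [hP, Polynomial.natDegree_prod _ _ (fun s _ => Polynomial.X_sub_C_ne_zero _)]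
    calc ∑ x ∈ V.erase s0, (Polynomial.X - Polynomial.C ((x:ℕ):ℝ)).natDegree
        = ∑ _x ∈ V.erase s0, 1 :=
          Finset.sum_congr rfl fun s _ => Polynomial.natDegree_X_sub_C _
      _ = (V.erase s0).card := by simp
      _ ≤ 2*k := by
          have := Finset.card_erase_of_mem hs0
          omega
  have hsum := sum_mul_eval hd P hdeg
  have hzero : ∀ s ∈ V, s ≠ s0 → d s * P.eval (s:ℝ) = 0 := by
    intro s hs hne
    rw [hP, Polynomial.eval_prod]
    rw [Finset.prod_eq_zero (Finset.mem_erase.mpr ⟨hne, hs⟩) (by simp), mul_zero]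
  rw [Finset.sum_eq_single s0 (fun s hs hne => hzero s hs hne) (fun h => absurd hs0 h)] at hsum
  have hPs0 : P.eval (s0:ℝ) ≠ 0 := by
    rw [hP, Polynomial.eval_prod]
    refine Finset.prod_ne_zero_iff.mpr fun s hs => ?_
    have : s ≠ s0 := (Finset.mem_erase.mp hs).1
    simp only [Polynomial.eval_sub, Polynomial.eval_X, Polynomial.eval_C]
    intro h
    exact this (by exact_mod_cast (sub_eq_zero.mp h).symm)
  rcases mul_eq_zero.mp hsum with h | h
  · exact h
  · exact absurd h hPs0


lemma core_unique {k : ℕ} {U A B : Finset ℕ} (hAB : A ∪ B = U)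
    (hd : Disjoint A B) (hU : U.card = 2*k+2)
    {a a' b b' : ℕ → ℝ} {x y : Fin (2*k) → ℝ}
    (ha1 : ∑ s ∈ A, a s = 1) (hax : ∑ s ∈ A, a s • mcv k s = x)
    (hb1 : ∑ s ∈ B, b s = 1) (hbx : ∑ s ∈ B, b s • mcv k s = x)
    (ha1' : ∑ s ∈ A, a' s = 1) (hax' : ∑ s ∈ A, a' s • mcv k s = y)
    (hb1' : ∑ s ∈ B, b' s = 1) (hbx' : ∑ s ∈ B, b' s • mcv k s = y) :
    x = y := by
  set c : ℕ → ℝ := fun s => if s ∈ A then a s else -b s with hcdef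
  set c' : ℕ → ℝ := fun s => if s ∈ A then a' s else -b' s with hcdef'
  have hc : ∀ j ≤ 2*k, ∑ s ∈ U, c s * (s:ℝ)^j = 0 := by
    rw [← hAB]; exact weights_dep hd ha1 hax hb1 hbx
  have hc' : ∀ j ≤ 2*k, ∑ s ∈ U, c' s * (s:ℝ)^j = 0 := by
    rw [← hAB]; exact weights_dep hd ha1' hax' hb1' hbx'
  have hne : ∃ s ∈ U, c s ≠ 0 := by
    by_contra h
    push_neg at h
    have : ∑ s ∈ A, a s = 0 := by
      refine Finset.sum_eq_zero fun s hs => ?_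
      have hsU : s ∈ U := hAB ▸ Finset.mem_union_left _ hs
      simpa [hcdef, hs] using h s hsU
    rw [ha1] at this; norm_num at this
  have h0 : c (U.orderEmbOfFin hU 0) ≠ 0 :=
    (master hU hc hne).1 _ (Finset.orderEmbOfFin_mem U hU 0)
  set l : ℝ := c' (U.orderEmbOfFin hU 0) / c (U.orderEmbOfFin hU 0) with hl
  have hsc := scalar_mult hU hc hc' h0
  have hsum : ∑ s ∈ A, a' s = l * ∑ s ∈ A, a s := by
    rw [Finset.mul_sum]
    refine Finset.sum_congr rfl fun s hs => ?_
    have hsU : s ∈ U := hAB ▸ Finset.mem_union_left _ hs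
    have := hsc s hsU
    simpa [hcdef, hcdef', hs] using this
  have hlone : l = 1 := by
    rw [ha1, ha1', mul_one] at hsum; exact hsum.symm
  have haeq : ∀ s ∈ A, a' s = a s := by
    intro s hs
    have hsU : s ∈ U := hAB ▸ Finset.mem_union_left _ hs
    have h2 := hsc s hsU
    rw [← hl, hlone, one_mul] at h2
    simpa [hcdef, hcdef', hs] using h2
  rw [← hax, ← hax']
  exact Finset.sum_congr rfl fun s hs => by rw [haeq s hs]


lemma alternates_symm {α : Type*} [LinearOrder α] {P Q : Finset α}
    (h : Alternates P Q) : Alternates Q P := by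
  obtain ⟨p, f, g, hf, hg, hrf, hrg, hc⟩ := h
  exact ⟨p, g, f, hg, hf, hrg, hrf, hc.symm⟩

lemma alternates_of_pattern {k : ℕ} {U A B : Finset ℕ} (hAB : A ∪ B = U) (hd : Disjoint A B)
    (hU : U.card = 2*k+2)
    (hpat : ∀ j : Fin (2*k+2), (U.orderEmbOfFin hU j ∈ A ↔ Even (j:ℕ))) :
    Alternates A B := by
  set e := U.orderEmbOfFin hU with he
  have hrange : ∀ s ∈ U, ∃ j : Fin (2*k+2), e j = s := by
    intro s hs
    have : s ∈ Set.range e := by rw [he, Finset.range_orderEmbOfFin]; exact hs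
    exact this
  have hBmem : ∀ j : Fin (2*k+2), (e j ∈ B ↔ ¬ Even (j:ℕ)) := by
    intro j
    have hjU : e j ∈ U := Finset.orderEmbOfFin_mem U hU j
    constructor
    · intro hj hev
      exact (Finset.disjoint_left.mp hd ((hpat j).mpr hev)) hj
    · intro hev
      rcases Finset.mem_union.mp (by rw [hAB]; exact hjU) with h | h
      · exact absurd ((hpat j).mp h) hev
      · exact h
  refine ⟨k+1,
    fun i => e ⟨2*(i:ℕ), by have := i.isLt; omega⟩,
    fun i => e ⟨2*(i:ℕ)+1, by have := i.isLt; omega⟩, ?_, ?_, ?_, ?_, ?_⟩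
  · intro i i' hii
    exact e.strictMono (by simp only [Fin.mk_lt_mk]; have : (i:ℕ) < (i':ℕ) := hii; omega)
  · intro i i' hii
    exact e.strictMono (by simp only [Fin.mk_lt_mk]; have : (i:ℕ) < (i':ℕ) := hii; omega)
  · ext s
    simp only [Set.mem_range, Finset.mem_coe]
    constructor
    · rintro ⟨i, rfl⟩
      exact (hpat _).mpr ⟨(i:ℕ), by simp; ring⟩
    · intro hs
      have hsU : s ∈ U := hAB ▸ Finset.mem_union_left _ hs
      obtain ⟨j, hj⟩ := hrange s hsU
      have hev : Even (j:ℕ) := (hpat j).mp (hj ▸ hs)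
      have hj2 : (j:ℕ) % 2 = 0 := Nat.even_iff.mp hev
      refine ⟨⟨(j:ℕ)/2, by have := j.isLt; omega⟩, ?_⟩
      rw [← hj]
      congr 1
      exact Fin.ext (by simp only []; omega)
  · ext s
    simp only [Set.mem_range, Finset.mem_coe]
    constructor
    · rintro ⟨i, rfl⟩
      exact (hBmem _).mpr (by simp [Nat.even_add_one, Nat.even_iff])
    · intro hs
      have hsU : s ∈ U := hAB ▸ Finset.mem_union_right _ hs
      obtain ⟨j, hj⟩ := hrange s hsU
      have hev : ¬ Even (j:ℕ) := (hBmem j).mp (hj ▸ hs)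
      have hj2 : (j:ℕ) % 2 = 1 := Nat.odd_iff.mp (Nat.not_even_iff_odd.mp hev)
      refine ⟨⟨(j:ℕ)/2, by have := j.isLt; omega⟩, ?_⟩
      rw [← hj]
      congr 1
      exact Fin.ext (by simp only []; omega)
  · left
    constructor
    · intro i
      exact e.strictMono (by simp only [Fin.mk_lt_mk]; omega)
    · intro i j hij
      exact e.strictMono (by simp only [Fin.mk_lt_mk]; omega)


lemma card_eq_of_range {p : ℕ} {f : Fin p → ℕ} (hf : StrictMono f) {A : Finset ℕ}
    (h : Set.range f = (A : Set ℕ)) : A.card = p := by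
  have hA : A = Finset.image f Finset.univ := Finset.coe_injective (by
    rw [Finset.coe_image, Finset.coe_univ, Set.image_univ, h])
  rw [hA, Finset.card_image_of_injective _ hf.injective, Finset.card_univ, Fintype.card_fin]

lemma pattern_build {k : ℕ} {U A B : Finset ℕ} (hAB : A ∪ B = U) (hd : Disjoint A B)
    (hU : U.card = 2*k+2) {f g : Fin (k+1) → ℕ}
    (hrf : Set.range f = (A : Set ℕ)) (hrg : Set.range g = (B : Set ℕ))
    (h1 : ∀ i, f i < g i) (h2 : ∀ i j : Fin (k+1), (i:ℕ)+1 = (j:ℕ) → g i < f j) :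
    ∀ j : Fin (2*k+2), (U.orderEmbOfFin hU j ∈ A ↔ Even (j:ℕ)) := by
  have hfA : ∀ i, f i ∈ A := fun i => by
    have : f i ∈ Set.range f := ⟨i, rfl⟩
    rw [hrf] at this; exact this
  have hgB : ∀ i, g i ∈ B := fun i => by
    have : g i ∈ Set.range g := ⟨i, rfl⟩
    rw [hrg] at this; exact this
  set h : Fin (2*k+2) → ℕ := fun j =>
    if Even (j:ℕ) then f ⟨(j:ℕ)/2, by have := j.isLt; omega⟩
    else g ⟨(j:ℕ)/2, by have := j.isLt; omega⟩ with hh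
  have hmem : ∀ j, h j ∈ U := by
    intro j
    rw [hh]
    by_cases hev : Even ((j:ℕ))
    · simp only [if_pos hev]
      exact hAB ▸ Finset.mem_union_left _ (hfA _)
    · simp only [if_neg hev]
      exact hAB ▸ Finset.mem_union_right _ (hgB _)
  have hmono : StrictMono h := by
    rw [Fin.strictMono_iff_lt_succ]
    intro j
    have hc1 : ((j.castSucc : Fin (2*k+2)) : ℕ) = (j:ℕ) := rfl
    have hc2 : ((j.succ : Fin (2*k+2)) : ℕ) = (j:ℕ)+1 := rfl
    by_cases hev : Even ((j:ℕ))
    · have hev2 : ¬ Even ((j:ℕ)+1) := by simp [Nat.even_add_one, hev]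
      rw [hh]
      simp only [hc1, hc2, if_pos hev, if_neg hev2]
      have hmod : (j:ℕ) % 2 = 0 := Nat.even_iff.mp hev
      have hidx : (⟨((j:ℕ)+1)/2, by have := j.isLt; omega⟩ : Fin (k+1))
          = ⟨(j:ℕ)/2, by have := j.isLt; omega⟩ := Fin.ext (by simp only []; omega)
      rw [hidx]
      exact h1 _
    · have hev2 : Even ((j:ℕ)+1) := by simp [Nat.even_add_one, hev]
      rw [hh]
      simp only [hc1, hc2, if_neg hev, if_pos hev2]
      refine h2 _ _ ?_
      simp only []
      have hmod : (j:ℕ) % 2 = 1 := Nat.odd_iff.mp (Nat.not_even_iff_odd.mp hev)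
      omega
  have hmain : h = ⇑(U.orderEmbOfFin hU) := Finset.orderEmbOfFin_unique hU hmem hmono
  intro j
  rw [← hmain, hh]
  by_cases hev : Even ((j:ℕ))
  · simp only [if_pos hev]
    exact ⟨fun _ => hev, fun _ => hfA _⟩
  · simp only [if_neg hev]
    exact ⟨fun hgA => absurd hgA (Finset.disjoint_right.mp hd (hgB _)), fun h => absurd h hev⟩

lemma pattern_of_alternates {k : ℕ} {U A B : Finset ℕ} (hAB : A ∪ B = U) (hd : Disjoint A B)
    (hU : U.card = 2*k+2) (hA : A.card = k+1) (halt : Alternates A B) :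
    (∀ j : Fin (2*k+2), (U.orderEmbOfFin hU j ∈ A ↔ Even (j:ℕ))) ∨
    (∀ j : Fin (2*k+2), (U.orderEmbOfFin hU j ∈ B ↔ Even (j:ℕ))) := by
  obtain ⟨p, f, g, hf, hg, hrf, hrg, hc⟩ := halt
  have hp : p = k+1 := by
    have := card_eq_of_range hf hrf
    omega
  subst hp
  rcases hc with ⟨h1, h2⟩ | ⟨h1, h2⟩
  · exact Or.inl (pattern_build hAB hd hU hrf hrg h1 h2)
  · exact Or.inr (pattern_build (by rw [Finset.union_comm]; exact hAB) hd.symm hU hrg hrf h1 h2)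


lemma compl_eq {A B U : Finset ℕ} (hAB : A ∪ B = U) (hd : Disjoint A B) : B = U \ A := by
  rw [← hAB, Finset.union_sdiff_cancel_left hd]

lemma set_eq_of_pattern {k : ℕ} {U : Finset ℕ} (hU : U.card = 2*k+2) {A A' : Finset ℕ}
    (hA : A ⊆ U) (hA' : A' ⊆ U) (p : Fin (2*k+2) → Prop)
    (h1 : ∀ j, (U.orderEmbOfFin hU j ∈ A ↔ p j)) (h2 : ∀ j, (U.orderEmbOfFin hU j ∈ A' ↔ p j)) :
    A = A' := by
  have hrange : ∀ s ∈ U, ∃ j : Fin (2*k+2), U.orderEmbOfFin hU j = s := by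
    intro s hs
    have : s ∈ Set.range (U.orderEmbOfFin hU) := by rw [Finset.range_orderEmbOfFin]; exact hs
    exact this
  ext s
  constructor
  · intro hs
    obtain ⟨j, hj⟩ := hrange s (hA hs)
    exact hj ▸ (h2 j).mpr ((h1 j).mp (hj ▸ hs))
  · intro hs
    obtain ⟨j, hj⟩ := hrange s (hA' hs)
    exact hj ▸ (h1 j).mpr ((h2 j).mp (hj ▸ hs))

lemma compl_pattern {k : ℕ} {U A B : Finset ℕ} (hAB : A ∪ B = U) (hd : Disjoint A B)
    (hU : U.card = 2*k+2) (p : Fin (2*k+2) → Prop)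
    (h : ∀ j, (U.orderEmbOfFin hU j ∈ A ↔ p j)) :
    ∀ j, (U.orderEmbOfFin hU j ∈ B ↔ ¬ p j) := by
  intro j
  have hjU : U.orderEmbOfFin hU j ∈ U := Finset.orderEmbOfFin_mem U hU j
  constructor
  · intro hjB hp
    exact Finset.disjoint_left.mp hd ((h j).mpr hp) hjB
  · intro hp
    rcases Finset.mem_union.mp (by rw [hAB]; exact hjU) with h' | h'
    · exact absurd ((h j).mp h') hp
    · exact h'

lemma alternates_of_mem {k : ℕ} (hk : 1 ≤ k) {A B : Finset ℕ} (hd : Disjoint A B)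
    (hA : A.card = k+1) (hB : B.card = k+1) {x : Fin (2*k) → ℝ}
    (hxA : x ∈ convexHull ℝ (mcv k '' (A : Set ℕ)))
    (hxB : x ∈ convexHull ℝ (mcv k '' (B : Set ℕ))) :
    Alternates A B := by
  have hU : (A ∪ B).card = 2*k+2 := by
    rw [Finset.card_union_of_disjoint hd, hA, hB]; ring
  obtain ⟨a, ha0, ha1, hax⟩ := (mem_hull_iff (mcv_inj k hk) A x).mp hxA
  obtain ⟨b, hb0, hb1, hbx⟩ := (mem_hull_iff (mcv_inj k hk) B x).mp hxB
  obtain ⟨_, _, halt⟩ := core rfl hd hU ha0 ha1 hax hb0 hb1 hbx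
  have hpat := chain_flip (fun j => (A ∪ B).orderEmbOfFin hU j ∈ A) halt
  by_cases h0 : (A ∪ B).orderEmbOfFin hU 0 ∈ A
  · have hp : ∀ j : Fin (2*k+2), ((A ∪ B).orderEmbOfFin hU j ∈ A ↔ Even (j:ℕ)) := by
      intro j
      simpa [h0] using hpat j
    exact alternates_of_pattern rfl hd hU hp
  · have hp : ∀ j : Fin (2*k+2), ((A ∪ B).orderEmbOfFin hU j ∈ A ↔ ¬ Even (j:ℕ)) := by
      intro j
      simpa [h0] using hpat j
    have hBp : ∀ j : Fin (2*k+2), ((A ∪ B).orderEmbOfFin hU j ∈ B ↔ Even (j:ℕ)) := by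
      intro j
      rw [compl_pattern rfl hd hU _ hp j]
      simp
    exact alternates_symm
      (alternates_of_pattern (by rw [Finset.union_comm]) hd.symm hU hBp)

lemma exists_point_of_alternates {k : ℕ} (hk : 1 ≤ k) {A B : Finset ℕ} (hd : Disjoint A B)
    (hA : A.card = k+1) (hB : B.card = k+1) (halt : Alternates A B) :
    ∃ x, x ∈ convexHull ℝ (mcv k '' (A : Set ℕ)) ∧ x ∈ convexHull ℝ (mcv k '' (B : Set ℕ)) := by
  have hU : (A ∪ B).card = 2*k+2 := by
    rw [Finset.card_union_of_disjoint hd, hA, hB]; ring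
  set e := (A ∪ B).orderEmbOfFin hU with he
  have hnai : ¬ AffineIndependent ℝ (fun i : Fin (2*k+2) => mcv k (e i)) := by
    intro hai
    have hcard := hai.card_le_finrank_succ
    have hle : Module.finrank ℝ (vectorSpan ℝ (Set.range (fun i : Fin (2*k+2) => mcv k (e i))))
        ≤ Module.finrank ℝ (Fin (2*k) → ℝ) := Submodule.finrank_le _
    rw [Module.finrank_fin_fun] at hle
    simp only [Fintype.card_fin] at hcard
    omega
  obtain ⟨S, x, hx1, hx2⟩ := Convex.radon_partition hnai
  set A' : Finset ℕ := (Finset.univ.filter (fun i : Fin (2*k+2) => i ∈ S)).image e with hA'def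
  set B' : Finset ℕ := (Finset.univ.filter (fun i : Fin (2*k+2) => i ∉ S)).image e with hB'def
  have hcoeA' : (A' : Set ℕ) = ⇑e '' S := by
    ext y
    simp [hA'def]
  have hcoeB' : (B' : Set ℕ) = ⇑e '' Sᶜ := by
    ext y
    simp [hB'def]
  have hxA' : x ∈ convexHull ℝ (mcv k '' (A' : Set ℕ)) := by
    rw [hcoeA', Set.image_image]
    exact hx1
  have hxB' : x ∈ convexHull ℝ (mcv k '' (B' : Set ℕ)) := by
    rw [hcoeB', Set.image_image]
    exact hx2
  have himg : Finset.image (⇑e) Finset.univ = A ∪ B := Finset.coe_injective (by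
    rw [Finset.coe_image, Finset.coe_univ, Set.image_univ, he, Finset.range_orderEmbOfFin])
  have hA'B' : A' ∪ B' = A ∪ B := by
    rw [hA'def, hB'def, ← Finset.image_union, Finset.filter_union_filter_not_eq, himg]
  have hd' : Disjoint A' B' := by
    rw [hA'def, hB'def]
    rw [Finset.disjoint_image e.injective]
    exact Finset.disjoint_filter_filter_not _ _ _
  obtain ⟨a, ha0, ha1, hax⟩ := (mem_hull_iff (mcv_inj k hk) A' x).mp hxA'
  obtain ⟨b, hb0, hb1, hbx⟩ := (mem_hull_iff (mcv_inj k hk) B' x).mp hxB'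
  obtain ⟨_, _, haltA'⟩ := core hA'B' hd' hU ha0 ha1 hax hb0 hb1 hbx
  have hpatA'0 := chain_flip (fun j => e j ∈ A') haltA'
  -- normalize the pattern of A'
  have hpatA' : (∀ j : Fin (2*k+2), (e j ∈ A' ↔ Even (j:ℕ))) ∨
      (∀ j : Fin (2*k+2), (e j ∈ A' ↔ ¬ Even (j:ℕ))) := by
    by_cases h0 : e 0 ∈ A'
    · left; intro j; simpa [h0] using hpatA'0 j
    · right; intro j; simpa [h0] using hpatA'0 j
  -- normalize the pattern of A from `Alternates`
  have hpatA : (∀ j : Fin (2*k+2), (e j ∈ A ↔ Even (j:ℕ))) ∨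
      (∀ j : Fin (2*k+2), (e j ∈ A ↔ ¬ Even (j:ℕ))) := by
    rcases pattern_of_alternates rfl hd hU hA halt with h | h
    · exact Or.inl h
    · right
      intro j
      have := compl_pattern (by rw [Finset.union_comm]) hd.symm hU _ h j
      exact this
  have hsubA : A ⊆ A ∪ B := Finset.subset_union_left
  have hsubB : B ⊆ A ∪ B := Finset.subset_union_right
  have hsubA' : A' ⊆ A ∪ B := by rw [← hA'B']; exact Finset.subset_union_left
  have hsubB' : B' ⊆ A ∪ B := by rw [← hA'B']; exact Finset.subset_union_right
  have hpatB : ∀ (p : Fin (2*k+2) → Prop), (∀ j, (e j ∈ A ↔ p j)) →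
      ∀ j, (e j ∈ B ↔ ¬ p j) := fun p hp => compl_pattern rfl hd hU p hp
  have hpatB' : ∀ (p : Fin (2*k+2) → Prop), (∀ j, (e j ∈ A' ↔ p j)) →
      ∀ j, (e j ∈ B' ↔ ¬ p j) := fun p hp => compl_pattern hA'B' hd' hU p hp
  rcases hpatA with hA1 | hA1 <;> rcases hpatA' with hA2 | hA2
  · have heq : A = A' := set_eq_of_pattern hU hsubA hsubA' _ hA1 hA2
    have heqB : B = B' := set_eq_of_pattern hU hsubB hsubB' _ (hpatB _ hA1) (hpatB' _ hA2)
    exact ⟨x, heq ▸ hxA', heqB ▸ hxB'⟩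
  · have heq : A = B' := set_eq_of_pattern hU hsubA hsubB' _ hA1
      (fun j => by rw [hpatB' _ hA2 j]; simp)
    have heqB : B = A' := set_eq_of_pattern hU hsubB hsubA' _ (hpatB _ hA1)
      (fun j => by rw [hA2 j])
    exact ⟨x, heq ▸ hxB', heqB ▸ hxA'⟩
  · have heq : A = B' := set_eq_of_pattern hU hsubA hsubB' _ hA1
      (fun j => by rw [hpatB' _ hA2 j])
    have heqB : B = A' := set_eq_of_pattern hU hsubB hsubA' _ (hpatB _ hA1)
      (fun j => by rw [hA2 j]; simp)
    exact ⟨x, heq ▸ hxB', heqB ▸ hxA'⟩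
  · have heq : A = A' := set_eq_of_pattern hU hsubA hsubA' _ hA1 hA2
    have heqB : B = B' := set_eq_of_pattern hU hsubB hsubB' _ (hpatB _ hA1) (hpatB' _ hA2)
    exact ⟨x, heq ▸ hxA', heqB ▸ hxB'⟩


lemma coord_sum {k : ℕ} {C : Finset ℕ} {w : ℕ → ℝ} {x : Fin (2*k) → ℝ}
    (hw : ∑ s ∈ C, w s • mcv k s = x) {j' : ℕ} (hj' : j' < 2*k) :
    ∑ s ∈ C, w s * (s:ℝ)^(j'+1) = x ⟨j', hj'⟩ := by
  have := congrFun hw ⟨j', hj'⟩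
  rw [Finset.sum_apply] at this
  simpa [mcv, moment] using this

lemma point_unique {k : ℕ} (hk : 1 ≤ k) {A B : Finset ℕ} (hd : Disjoint A B)
    (hA : A.card = k+1) (hB : B.card = k+1) {x y : Fin (2*k) → ℝ}
    (hxA : x ∈ convexHull ℝ (mcv k '' (A : Set ℕ)))
    (hxB : x ∈ convexHull ℝ (mcv k '' (B : Set ℕ)))
    (hyA : y ∈ convexHull ℝ (mcv k '' (A : Set ℕ)))
    (hyB : y ∈ convexHull ℝ (mcv k '' (B : Set ℕ))) : x = y := by
  have hU : (A ∪ B).card = 2*k+2 := by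
    rw [Finset.card_union_of_disjoint hd, hA, hB]; ring
  obtain ⟨a, _, ha1, hax⟩ := (mem_hull_iff (mcv_inj k hk) A x).mp hxA
  obtain ⟨b, _, hb1, hbx⟩ := (mem_hull_iff (mcv_inj k hk) B x).mp hxB
  obtain ⟨a', _, ha1', hax'⟩ := (mem_hull_iff (mcv_inj k hk) A y).mp hyA
  obtain ⟨b', _, hb1', hbx'⟩ := (mem_hull_iff (mcv_inj k hk) B y).mp hyB
  exact core_unique rfl hd hU ha1 hax hb1 hbx ha1' hax' hb1' hbx'

lemma second_unique {k : ℕ} (hk : 1 ≤ k) {A B B' : Finset ℕ}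
    (hdB : Disjoint A B) (hdB' : Disjoint A B')
    (hA : A.card = k+1) (hB : B.card = k+1) (hB' : B'.card = k+1)
    (hcard : (B ∪ B').card ≤ 2*k+1)
    {x : Fin (2*k) → ℝ}
    (hxA : x ∈ convexHull ℝ (mcv k '' (A : Set ℕ)))
    (hxB : x ∈ convexHull ℝ (mcv k '' (B : Set ℕ)))
    (hxB' : x ∈ convexHull ℝ (mcv k '' (B' : Set ℕ))) : B = B' := by
  have hU : (A ∪ B).card = 2*k+2 := by
    rw [Finset.card_union_of_disjoint hdB, hA, hB]; ring
  have hU' : (A ∪ B').card = 2*k+2 := by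
    rw [Finset.card_union_of_disjoint hdB', hA, hB']; ring
  obtain ⟨a, ha0, ha1, hax⟩ := (mem_hull_iff (mcv_inj k hk) A x).mp hxA
  obtain ⟨b, hb0, hb1, hbx⟩ := (mem_hull_iff (mcv_inj k hk) B x).mp hxB
  obtain ⟨b', hb0', hb1', hbx'⟩ := (mem_hull_iff (mcv_inj k hk) B' x).mp hxB'
  obtain ⟨_, hBpos, _⟩ := core rfl hdB hU ha0 ha1 hax hb0 hb1 hbx
  obtain ⟨_, hB'pos, _⟩ := core rfl hdB' hU' ha0 ha1 hax hb0' hb1' hbx'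
  set d : ℕ → ℝ := fun s => (if s ∈ B then b s else 0) - (if s ∈ B' then b' s else 0) with hddef
  have hsplit : ∀ (C : Finset ℕ) (w : ℕ → ℝ) (j : ℕ), C ⊆ B ∪ B' →
      ∑ s ∈ B ∪ B', (if s ∈ C then w s else 0) * (s:ℝ)^j = ∑ s ∈ C, w s * (s:ℝ)^j := by
    intro C w j hsub
    rw [← Finset.sum_subset hsub (fun s _ hs => by rw [if_neg hs, zero_mul])]
    exact Finset.sum_congr rfl fun s hs => by rw [if_pos hs]
  have hdzero : ∀ j ≤ 2*k, ∑ s ∈ B ∪ B', d s * (s:ℝ)^j = 0 := by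
    intro j hj
    have hexp : ∑ s ∈ B ∪ B', d s * (s:ℝ)^j
        = (∑ s ∈ B, b s * (s:ℝ)^j) - ∑ s ∈ B', b' s * (s:ℝ)^j := by
      rw [← hsplit B b j Finset.subset_union_left, ← hsplit B' b' j Finset.subset_union_right,
        ← Finset.sum_sub_distrib]
      exact Finset.sum_congr rfl fun s _ => by rw [hddef]; ring
    rw [hexp]
    rcases Nat.eq_zero_or_pos j with hj0 | hjpos
    · subst hj0
      simp only [pow_zero, mul_one]
      rw [hb1, hb1']; ring
    · obtain ⟨j', rfl⟩ : ∃ j', j = j' + 1 := ⟨j - 1, by omega⟩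
      have hj' : j' < 2*k := by omega
      rw [coord_sum hbx hj', coord_sum hbx' hj']; ring
  have hall := small_indep hcard hdzero
  have hsub : B ⊆ B' := by
    intro s hs
    by_contra hs'
    have := hall s (Finset.mem_union_left _ hs)
    rw [hddef] at this
    simp only [if_pos hs, if_neg hs'] at this
    have := hBpos s hs
    linarith
  exact Finset.eq_of_subset_of_card_le hsub (by omega)


noncomputable def pt (k : ℕ) (I J : Finset ℕ) : Fin (2*k) → ℝ :=
  if h : (convexHull ℝ (mcv k '' (I : Set ℕ)) ∩ convexHull ℝ (mcv k '' (J : Set ℕ))).Nonempty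
  then h.choose else 0

lemma pt_spec {k : ℕ} {I J : Finset ℕ}
    (h : (convexHull ℝ (mcv k '' (I : Set ℕ)) ∩ convexHull ℝ (mcv k '' (J : Set ℕ))).Nonempty) :
    pt k I J ∈ convexHull ℝ (mcv k '' (I : Set ℕ)) ∧
      pt k I J ∈ convexHull ℝ (mcv k '' (J : Set ℕ)) := by
  have hh : pt k I J = h.choose := dif_pos h
  rw [hh]
  exact h.choose_spec

end Stmt15


theorem stmt15 (k : ℕ) (hk : 1 ≤ k) (I : Finset ℕ)
    (hI : I ⊆ Finset.Icc 1 (2 * k + 3)) (hIcard : I.card = k + 1) :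
    (convexHull ℝ ((fun n : ℕ => moment (2 * k) (n : ℝ)) '' (I : Set ℕ)) ∩
      ⋃ J ∈ (Finset.Icc 1 (2 * k + 3) \ I).powersetCard (k + 1),
        convexHull ℝ ((fun n : ℕ => moment (2 * k) (n : ℝ)) '' (J : Set ℕ))).Finite ∧
    (convexHull ℝ ((fun n : ℕ => moment (2 * k) (n : ℝ)) '' (I : Set ℕ)) ∩
      ⋃ J ∈ (Finset.Icc 1 (2 * k + 3) \ I).powersetCard (k + 1),
        convexHull ℝ ((fun n : ℕ => moment (2 * k) (n : ℝ)) '' (J : Set ℕ))).ncard =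
      Set.ncard {J : Finset ℕ | J ⊆ Finset.Icc 1 (2 * k + 3) \ I ∧
        J.card = k + 1 ∧ Alternates I J} := by
  classical
  have hphi : (fun n : ℕ => moment (2 * k) (n : ℝ)) = Stmt15.mcv k := rfl
  rw [hphi]
  set comp : Finset ℕ := Finset.Icc 1 (2 * k + 3) \ I with hcomp
  have hcompcard : comp.card = k + 2 := by
    rw [hcomp, Finset.card_sdiff_of_subset hI, Nat.card_Icc, hIcard]
    omega
  have hJfacts : ∀ J ∈ comp.powersetCard (k+1), J ⊆ comp ∧ J.card = k+1 ∧ Disjoint I J := by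
    intro J hJ
    obtain ⟨hsub, hcard⟩ := Finset.mem_powersetCard.mp hJ
    refine ⟨hsub, hcard, ?_⟩
    have : Disjoint comp I := by rw [hcomp]; exact Finset.sdiff_disjoint
    exact (this.mono_left hsub).symm
  set 𝒥 : Finset (Finset ℕ) := (comp.powersetCard (k+1)).filter (fun J => Alternates I J)
    with h𝒥
  have hiff : ∀ J ∈ comp.powersetCard (k+1),
      ((convexHull ℝ (Stmt15.mcv k '' (I : Set ℕ)) ∩
        convexHull ℝ (Stmt15.mcv k '' (J : Set ℕ))).Nonempty ↔ Alternates I J) := by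
    intro J hJ
    obtain ⟨hsub, hcard, hdisj⟩ := hJfacts J hJ
    constructor
    · rintro ⟨x, hx1, hx2⟩
      exact Stmt15.alternates_of_mem hk hdisj hIcard hcard hx1 hx2
    · intro halt
      obtain ⟨x, h1, h2⟩ := Stmt15.exists_point_of_alternates hk hdisj hIcard hcard halt
      exact ⟨x, h1, h2⟩
  have hSeq : (convexHull ℝ (Stmt15.mcv k '' (I : Set ℕ)) ∩
      ⋃ J ∈ comp.powersetCard (k + 1), convexHull ℝ (Stmt15.mcv k '' (J : Set ℕ)))
      = Stmt15.pt k I '' (𝒥 : Set (Finset ℕ)) := by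
    ext x
    simp only [Set.mem_inter_iff, Set.mem_iUnion, exists_prop, Set.mem_image, Finset.mem_coe]
    constructor
    · rintro ⟨hxI, J, hJpc, hxJ⟩
      obtain ⟨hsub, hcard, hdisj⟩ := hJfacts J hJpc
      have halt : Alternates I J := Stmt15.alternates_of_mem hk hdisj hIcard hcard hxI hxJ
      have hne : (convexHull ℝ (Stmt15.mcv k '' (I : Set ℕ)) ∩
          convexHull ℝ (Stmt15.mcv k '' (J : Set ℕ))).Nonempty := ⟨x, hxI, hxJ⟩
      refine ⟨J, Finset.mem_filter.mpr ⟨hJpc, halt⟩, ?_⟩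
      obtain ⟨hs1, hs2⟩ := Stmt15.pt_spec hne
      exact Stmt15.point_unique hk hdisj hIcard hcard hs1 hs2 hxI hxJ
    · rintro ⟨J, hJ𝒥, rfl⟩
      obtain ⟨hJpc, halt⟩ := Finset.mem_filter.mp hJ𝒥
      obtain ⟨hsub, hcard, hdisj⟩ := hJfacts J hJpc
      have hne := (hiff J hJpc).mpr halt
      obtain ⟨hs1, hs2⟩ := Stmt15.pt_spec hne
      exact ⟨hs1, J, hJpc, hs2⟩
  have hinj : Set.InjOn (Stmt15.pt k I) (𝒥 : Set (Finset ℕ)) := by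
    intro J hJ J' hJ' heq
    obtain ⟨hJpc, haltJ⟩ := Finset.mem_filter.mp (Finset.mem_coe.mp hJ)
    obtain ⟨hJpc', haltJ'⟩ := Finset.mem_filter.mp (Finset.mem_coe.mp hJ')
    obtain ⟨hsub, hcard, hdisj⟩ := hJfacts J hJpc
    obtain ⟨hsub', hcard', hdisj'⟩ := hJfacts J' hJpc'
    have hne := (hiff J hJpc).mpr haltJ
    have hne' := (hiff J' hJpc').mpr haltJ'
    obtain ⟨hs1, hs2⟩ := Stmt15.pt_spec hne
    obtain ⟨hs1', hs2'⟩ := Stmt15.pt_spec hne'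
    have hcardUU : (J ∪ J').card ≤ 2*k+1 := by
      have hsubU : J ∪ J' ⊆ comp := Finset.union_subset hsub hsub'
      have := Finset.card_le_card hsubU
      omega
    refine Stmt15.second_unique hk hdisj hdisj' hIcard hcard hcard' hcardUU hs1 hs2 ?_
    rw [heq]
    exact hs2'
  have hRHS : {J : Finset ℕ | J ⊆ comp ∧ J.card = k + 1 ∧ Alternates I J}
      = (𝒥 : Set (Finset ℕ)) := by
    ext J
    simp only [Set.mem_setOf_eq, Finset.mem_coe, h𝒥, Finset.mem_filter,
      Finset.mem_powersetCard]
    tauto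
  rw [hSeq, hRHS]
  refine ⟨(𝒥.finite_toSet).image _, ?_⟩
  rw [Set.ncard_image_of_injOn hinj]
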